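/- Let V be a d'-dimensional 𝔽_2-vector space, S ⊆ V with |S| = k ≥ 2^d, and let p be the probability that a uniformly random linear map φ: V → 𝔽_2^d satisfies φ(S) = 𝔽_2^d. Then there exists a k × (2^{d'} − 1) binary matrix with exactly 2^{d·d'}·p/d! shattered k×d submatrices. -/

import Mathlib

open Finset

def ColsShattered {k n : ℕ} (M : Fin k → Fin n → Bool) (s : Finset (Fin n)) : Prop :=
  ∀ g : Fin n → Bool, ∃ i : Fin k, ∀ j ∈ s, M i j = g j

open Classical in
noncomputable def shatteredCount {k n : ℕ} (d : ℕ) (M : Fin k → Fin n → Bool) : ℕ :=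
  ((Finset.univ.powersetCard d).filter (fun s => ColsShattered M s)).card

theorem stmt10 (d d' k : ℕ) (hk : 2 ^ d ≤ k)
    (V : Type) [AddCommGroup V] [Module (ZMod 2) V] [FiniteDimensional (ZMod 2) V]
    (hdim : Module.finrank (ZMod 2) V = d')
    (S : Finset V) (hS : S.card = k)
    (p : ℝ)
    (hp : p = (Nat.card {φ : V →ₗ[ZMod 2] (Fin d → ZMod 2) //
        ∀ y : Fin d → ZMod 2, ∃ v ∈ S, φ v = y} : ℝ) / (2 : ℝ) ^ (d * d')) :
    ∃ M : Fin k → Fin (2 ^ d' - 1) → Bool,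
      (shatteredCount d M : ℝ) = (2 : ℝ) ^ (d * d') * p / (d.factorial : ℝ) := by
  classical
  have hfinV : Finite V := Module.finite_of_finite (ZMod 2)
  have : Fintype V := Fintype.ofFinite V
  haveI : Finite (V →ₗ[ZMod 2] ZMod 2) :=
    Finite.of_injective _ (DFunLike.coe_injective (F := V →ₗ[ZMod 2] ZMod 2))
  haveI : Finite (V →ₗ[ZMod 2] (Fin d → ZMod 2)) :=
    Finite.of_injective _ (DFunLike.coe_injective (F := V →ₗ[ZMod 2] (Fin d → ZMod 2)))
  haveI : Fintype (V →ₗ[ZMod 2] ZMod 2) := Fintype.ofFinite _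
  haveI : Fintype (V →ₗ[ZMod 2] (Fin d → ZMod 2)) := Fintype.ofFinite _
  set n := 2 ^ d' - 1 with hn
  -- column index equiv
  have h1 : Fintype.card (V →ₗ[ZMod 2] ZMod 2) = 2 ^ d' := by
    rw [Module.card_eq_pow_finrank (K := ZMod 2), ZMod.card, Module.finrank_linearMap, hdim,
      Module.finrank_self, mul_one]
  have hcardU : Fintype.card {u : V →ₗ[ZMod 2] ZMod 2 // u ≠ 0} = n := by
    rw [hn]
    rw [Fintype.card_subtype_compl, h1, Fintype.card_subtype_eq]
  let e : Fin n ≃ {u : V →ₗ[ZMod 2] ZMod 2 // u ≠ 0} := (Fintype.equivFinOfCardEq hcardU).symm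
  have hkS : Fintype.card {v : V // v ∈ S} = k := by rw [Fintype.card_coe, hS]
  let vE : Fin k ≃ {v : V // v ∈ S} := (Fintype.equivFinOfCardEq hkS).symm
  let M : Fin k → Fin n → Bool := fun i j => decide ((e j).1 (vE i).1 = 1)
  refine ⟨M, ?_⟩
  set Q : (Fin d → Fin n) → Prop :=
    fun c => ∀ y : Fin d → ZMod 2, ∃ v ∈ S, ∀ j, (e (c j)).1 v = y j with hQdef
  -- Step A : Nat.card T = card of Q-tuples
  have hne : ∀ (φ : V →ₗ[ZMod 2] (Fin d → ZMod 2)),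
      (∀ y : Fin d → ZMod 2, ∃ v ∈ S, φ v = y) → ∀ j, (LinearMap.proj j).comp φ ≠ 0 := by
    intro φ hφ j h
    obtain ⟨v, hv, hvy⟩ := hφ (Pi.single j 1)
    have h0 : ((LinearMap.proj j).comp φ) v = 0 := by rw [h]; rfl
    have h1' : φ v j = (1 : ZMod 2) := by rw [hvy, Pi.single_eq_same]
    simp only [LinearMap.comp_apply, LinearMap.proj_apply] at h0
    rw [h1'] at h0
    exact one_ne_zero h0
  have cardT : Nat.card {φ : V →ₗ[ZMod 2] (Fin d → ZMod 2) //
      ∀ y : Fin d → ZMod 2, ∃ v ∈ S, φ v = y} = (univ.filter Q).card := by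
    rw [← Fintype.card_subtype]
    rw [Nat.card_eq_fintype_card]
    refine Fintype.card_congr ?_
    refine
      { toFun := fun φ => ⟨fun j => e.symm ⟨(LinearMap.proj j).comp φ.1, hne φ.1 φ.2 j⟩, ?_⟩
        invFun := fun c => ⟨LinearMap.pi (fun j => (e (c.1 j)).1), ?_⟩
        left_inv := ?_
        right_inv := ?_ }
    · intro y
      obtain ⟨v, hv, hvy⟩ := φ.2 y
      refine ⟨v, hv, fun j => ?_⟩
      simp only [Equiv.apply_symm_apply, LinearMap.comp_apply, LinearMap.proj_apply, hvy]
    · intro y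
      obtain ⟨v, hv, hvy⟩ := c.2 y
      refine ⟨v, hv, ?_⟩
      funext j
      simp only [LinearMap.pi_apply, hvy]
    · intro φ
      apply Subtype.ext
      apply LinearMap.ext
      intro v
      funext j
      simp [LinearMap.pi_apply, Equiv.apply_symm_apply]
    · intro c
      apply Subtype.ext
      funext j
      rw [Equiv.symm_apply_eq]
      apply Subtype.ext
      simp [LinearMap.proj_pi]
  -- Step B : Q implies injective
  have hQinj : ∀ c, Q c → Function.Injective c := by
    intro c hc j j' hjj'
    by_contra hne'
    obtain ⟨v, hv, h⟩ := hc (Pi.single j 1)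
    have h1' := h j
    have h2' := h j'
    rw [Pi.single_eq_same] at h1'
    rw [Pi.single_eq_of_ne (Ne.symm hne')] at h2'
    rw [hjj'] at h1'
    rw [h1'] at h2'
    exact one_ne_zero h2'
  -- Step C : Q ↔ shattered
  have hQ_shatter : ∀ c, Q c → ColsShattered M (univ.image c) := by
    intro c hc g
    obtain ⟨v, hv, hvy⟩ := hc (fun j => if g (c j) then 1 else 0)
    refine ⟨vE.symm ⟨v, hv⟩, ?_⟩
    intro j' hj'
    obtain ⟨j, -, rfl⟩ := mem_image.mp hj'
    have hvj := hvy j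
    show decide ((e (c j)).1 (vE (vE.symm ⟨v, hv⟩)).1 = 1) = g (c j)
    rw [Equiv.apply_symm_apply]
    by_cases hg : g (c j)
    · rw [if_pos hg] at hvj
      simp [hvj, hg]
    · rw [if_neg hg] at hvj
      rw [hvj]
      simp [hg, Bool.eq_false_iff]
  have hshatter_Q : ∀ c, Function.Injective c → ColsShattered M (univ.image c) → Q c := by
    intro c hinj hsh y
    obtain ⟨i, hi⟩ := hsh (fun j' => decide (∃ j, c j = j' ∧ y j = 1))
    refine ⟨(vE i).1, (vE i).2, fun j => ?_⟩
    have h1' := hi (c j) (mem_image_of_mem _ (mem_univ j))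
    have h2' : (∃ j'', c j'' = c j ∧ y j'' = 1) ↔ y j = 1 :=
      ⟨fun ⟨j'', hj'', hy⟩ => (hinj hj'') ▸ hy, fun h => ⟨j, rfl, h⟩⟩
    have h3' : ((e (c j)).1 (vE i).1 = 1) ↔ (y j = 1) := by
      constructor
      · intro h
        simp only [M, h, decide_eq_true_eq] at h1'
        exact h2'.mp (of_decide_eq_true h1'.symm)
      · intro h
        have : decide (∃ j'', c j'' = c j ∧ y j'' = 1) = true := decide_eq_true (h2'.mpr h)
        rw [this] at h1'
        exact of_decide_eq_true h1'
    have key : ∀ a b : ZMod 2, ((a = 1) ↔ (b = 1)) → a = b := by decide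
    exact key _ _ h3'
  -- Step D : counting
  have hfiber : (univ.filter Q).card
      = ∑ s ∈ (univ.powersetCard d).filter (fun s => ColsShattered M s), d.factorial := by
    rw [Finset.card_eq_sum_card_fiberwise (f := fun c => univ.image c)
      (t := (univ.powersetCard d).filter (fun s => ColsShattered M s)) ?_]
    · refine Finset.sum_congr rfl ?_
      intro s hs
      rw [mem_filter, Finset.mem_powersetCard] at hs
      obtain ⟨⟨-, hscard⟩, hsshat⟩ := hs
      have hims_inj : ∀ c : Fin d → Fin n, Finset.image c univ = s → Function.Injective c := by
        intro c hcs
        have hcard : #(Finset.image c univ) = #(univ : Finset (Fin d)) := by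
          rw [hcs, hscard, card_univ, Fintype.card_fin]
        rw [Finset.card_image_iff] at hcard
        exact fun a b hab => hcard (by simp) (by simp) hab
      have hQfree : (univ.filter Q).filter (fun c => univ.image c = s)
          = univ.filter (fun c => univ.image c = s) := by
        ext c
        simp only [mem_filter, mem_univ, true_and, and_iff_right_iff_imp]
        intro hcs
        exact hshatter_Q c (hims_inj c hcs) (hcs ▸ hsshat)
      rw [hQfree, ← Fintype.card_subtype]
      have hE : {c : Fin d → Fin n // Finset.image c univ = s} ≃ (Fin d ↪ {x : Fin n // x ∈ s}) := by
        refine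
          { toFun := fun c => ⟨fun j => ⟨c.1 j, by have h := mem_image_of_mem c.1 (mem_univ j); rwa [c.2] at h⟩, ?_⟩
            invFun := fun f => ⟨fun j => (f j).1, ?_⟩
            left_inv := fun c => Subtype.ext (funext fun j => rfl)
            right_inv := fun f => by ext j; rfl }
        · intro a b hab
          exact hims_inj c.1 c.2 (congrArg Subtype.val hab)
        · apply Finset.eq_of_subset_of_card_le
          · intro x hx
            obtain ⟨j, -, rfl⟩ := mem_image.mp hx
            exact (f j).2
          · rw [Finset.card_image_of_injective _
              (fun a b hab => f.injective (Subtype.ext hab)), card_univ, Fintype.card_fin]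
            exact hscard.le
      rw [Fintype.card_congr hE, Fintype.card_embedding_eq, Fintype.card_fin, Fintype.card_coe,
        hscard, Nat.descFactorial_self]
    · intro c hc
      rw [Finset.mem_coe, mem_filter] at hc
      rw [Finset.mem_coe, mem_filter]
      have hcinj := hQinj c hc.2
      refine ⟨Finset.mem_powersetCard.mpr ⟨subset_univ _, ?_⟩, hQ_shatter c hc.2⟩
      rw [Finset.card_image_of_injective _ hcinj, card_univ, Fintype.card_fin]
  have main : Nat.card {φ : V →ₗ[ZMod 2] (Fin d → ZMod 2) //
      ∀ y : Fin d → ZMod 2, ∃ v ∈ S, φ v = y} = shatteredCount d M * d.factorial := by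
    rw [cardT, hfiber, Finset.sum_const, smul_eq_mul]
    rfl
  -- final arithmetic
  rw [hp]
  have h2 : (2 : ℝ) ^ (d * d') ≠ 0 := by positivity
  have hd : (d.factorial : ℝ) ≠ 0 := Nat.cast_ne_zero.mpr d.factorial_ne_zero
  field_simp
  rw [main]
  push_cast
  ring
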